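/- Let H : E → ℝ be differentiable and let G : E → ℝ be differentiable with differentiable gradient map x ↦ gradient G x. Assume that G Poisson-commutes with H: ⟪gradient H x, ω⁻¹ (gradient G x)⟫ = 0 for all x ∈ E. Define Q : E → E by Q(x) = ω⁻¹ (gradient G x) and k : E → ℝ by k(x) = (1/2)⟪x, gradient G x⟫ - G(x). Then the invariance condition holds: for all x, v ∈ E, (1/2)⟪Q x, ω v⟫ + (1/2)⟪x, ω ((DQ)_x v)⟫ - ⟪gradient H x, Q x⟫ = ⟪gradient k x, v⟫, where (DQ)_x is the Fréchet derivative of Q at x. (This is the paper's Theorem: if G is a differentiable functional with ∂G/∂t + {G, H} = 0, then the variation generated by G preserves the Hamiltonian action up to a total time derivative; here in the time-independent, Hilbert-space form.) -/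

import Mathlib

open RealInnerProductSpace

/-- Converse Noether theorem, hamiltonian form (time-independent, Hilbert-space version):
if `G` Poisson-commutes with `H`, then the variation generated by `G`, i.e.
`Q(x) = ω⁻¹(gradient G x)`, preserves the Hamiltonian action up to the total time
derivative of `k(x) = (1/2)⟪x, gradient G x⟫ - G(x)`. -/
theorem conserved_generator_gives_symmetry
    {E : Type*} [NormedAddCommGroup E] [InnerProductSpace ℝ E] [CompleteSpace E]
    (ω : E ≃L[ℝ] E)
    (hω : ∀ x y : E, ⟪ω x, y⟫ = -⟪x, ω y⟫)
    (H G : E → ℝ) (hH : Differentiable ℝ H) (hG : Differentiable ℝ G)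
    (hgradG : Differentiable ℝ (fun x => gradient G x))
    (hcomm : ∀ x : E, ⟪gradient H x, ω.symm (gradient G x)⟫ = 0) :
    ∀ x v : E,
      (1 / 2 : ℝ) * ⟪ω.symm (gradient G x), ω v⟫
        + (1 / 2 : ℝ) * ⟪x, ω (fderiv ℝ (fun y => ω.symm (gradient G y)) x v)⟫
        - ⟪gradient H x, ω.symm (gradient G x)⟫
      = ⟪gradient (fun y => (1 / 2 : ℝ) * ⟪y, gradient G y⟫ - G y) x, v⟫ := by
  intro x v
  set g : E → E := fun y => gradient G y with hg
  -- fderiv of ω.symm ∘ g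
  have hQ : fderiv ℝ (fun y => ω.symm (g y)) x = (ω.symm : E →L[ℝ] E).comp (fderiv ℝ g x) := by
    exact (((ω.symm : E →L[ℝ] E).hasFDerivAt.comp x (hgradG x).hasFDerivAt)).fderiv
  -- differentiability of inner term
  have hinner : DifferentiableAt ℝ (fun y => ⟪y, g y⟫) x :=
    (differentiableAt_fun_id.inner ℝ (hgradG x))
  have hk : DifferentiableAt ℝ (fun y => (1 / 2 : ℝ) * ⟪y, g y⟫ - G y) x :=
    (hinner.const_mul _).sub (hG x)
  -- gradient pairing = fderiv
  have hgradk : ⟪gradient (fun y => (1 / 2 : ℝ) * ⟪y, g y⟫ - G y) x, v⟫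
      = fderiv ℝ (fun y => (1 / 2 : ℝ) * ⟪y, g y⟫ - G y) x v := by
    rw [hk.hasGradientAt.gradient]
    simp [gradient]
  have hfk : fderiv ℝ (fun y => (1 / 2 : ℝ) * ⟪y, g y⟫ - G y) x v
      = (1 / 2 : ℝ) * (⟪x, fderiv ℝ g x v⟫ + ⟪v, g x⟫) - fderiv ℝ G x v := by
    rw [fderiv_fun_sub (hinner.const_mul _) (hG x)]
    simp only [ContinuousLinearMap.sub_apply]
    rw [fderiv_const_mul hinner]
    simp only [ContinuousLinearMap.smul_apply, smul_eq_mul]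
    rw [fderiv_inner_apply ℝ differentiableAt_fun_id (hgradG x)]
    simp
  have hGv : fderiv ℝ G x v = ⟪g x, v⟫ := by
    rw [(hG x).hasGradientAt.hasFDerivAt.fderiv]
    simp [hg, gradient]
  -- first term
  have h1 : ⟪ω.symm (g x), ω v⟫ = -⟪g x, v⟫ := by
    have h := hω (ω.symm (g x)) v
    simp only [ContinuousLinearEquiv.apply_symm_apply] at h
    linarith
  -- second term
  have h2 : ⟪x, ω (fderiv ℝ (fun y => ω.symm (g y)) x v)⟫ = ⟪x, fderiv ℝ g x v⟫ := by
    rw [hQ]; simp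
  rw [hgradk, hfk, hGv, h1, h2, hcomm x]
  ring_nf
  rw [real_inner_comm v (g x)]
  ring
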